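/- arXiv:2212.04353 — 2 statements merged into one kernel-verified Lean document; each statement's English description precedes it below -/
import Mathlib

section
/- Let $\pi : (K,\mu) \to (L,\nu)$ be a continuous measure-preserving map between compact metrizable probability spaces. If $\mu$ admits a disintegration $(\mu_l)_{l\in L}$ over $\nu$ such that $\mu_l$ is a Dirac measure for $\nu$-a.e. $l$, then $\pi$ is essentially invertible: there is a measurable map $s : L \to K$ with $\pi \circ s = \mathrm{id}_L$ $\nu$-a.e. and $s \circ \pi = \mathrm{id}_K$ $\mu$-a.e. -/
open MeasureTheory Filter Topology
open scoped ENNReal NNReal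

/-- If `π : (K, μ) → (L, ν)` is a continuous measure-preserving map between compact
metrizable probability spaces and `μ` admits a disintegration `(μ_l)` over `ν` whose fiber
measures are `ν`-a.e. Dirac measures, then `π` is essentially invertible: there is a
measurable `s : L → K` with `π ∘ s = id` `ν`-a.e. and `s ∘ π = id` `μ`-a.e. -/
theorem essentially_invertible_of_dirac_disintegration
    {K L : Type*}
    [TopologicalSpace K] [CompactSpace K] [TopologicalSpace.MetrizableSpace K]
    [MeasurableSpace K] [BorelSpace K]
    [TopologicalSpace L] [CompactSpace L] [TopologicalSpace.MetrizableSpace L]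
    [MeasurableSpace L] [BorelSpace L]
    (μ : Measure K) [IsProbabilityMeasure μ] (ν : Measure L) [IsProbabilityMeasure ν]
    (π : K → L) (hπcont : Continuous π) (hπ : Measure.map π μ = ν)
    (μl : L → Measure K) (hprob : ∀ l, IsProbabilityMeasure (μl l))
    (hmeas : ∀ s : Set K, MeasurableSet s → Measurable fun l => μl l s)
    (hdis : ∀ s : Set K, MeasurableSet s → μ s = ∫⁻ l, μl l s ∂ν)
    (hfib : ∀ᵐ l ∂ν, μl l ((π ⁻¹' {l})ᶜ) = 0)
    (hdirac : ∀ᵐ l ∂ν, ∃ x : K, μl l = Measure.dirac x) :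
    ∃ s : L → K, Measurable s ∧ (∀ᵐ l ∂ν, π (s l) = l) ∧ (∀ᵐ x ∂μ, s (π x) = x) := by
  classical
  letI := TopologicalSpace.metrizableSpaceMetric K
  have hKne : Nonempty K := by
    by_contra h
    rw [not_nonempty_iff] at h
    have := measure_univ (μ := μ)
    simp [Set.univ_eq_empty_iff.2 h] at this
  -- dense sequence in K
  obtain ⟨u, hu⟩ : ∃ u : ℕ → K, DenseRange u :=
    ⟨TopologicalSpace.denseSeq K, TopologicalSpace.denseRange_denseSeq K⟩
  -- embedding of K into (ℕ → ℝ≥0∞)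
  set e : K → ℕ → ℝ≥0∞ := fun x n => ENNReal.ofReal (dist x (u n)) with he
  have he_cont : Continuous e := by
    refine continuous_pi fun n => ?_
    exact ENNReal.continuous_ofReal.comp (continuous_id.dist continuous_const)
  have he_inj : Function.Injective e := by
    intro x y hxy
    have hd : ∀ n, dist x (u n) = dist y (u n) := by
      intro n
      have := congrFun hxy n
      simp only [he] at this
      exact (ENNReal.ofReal_eq_ofReal_iff dist_nonneg dist_nonneg).1 this
    by_contra hne
    have hpos : 0 < dist x y := dist_pos.2 hne
    obtain ⟨n, hn⟩ : ∃ n, dist x (u n) < dist x y / 2 :=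
      Metric.denseRange_iff.1 hu x (dist x y / 2) (by linarith)
    have : dist x y ≤ dist x (u n) + dist (u n) y := dist_triangle _ _ _
    rw [dist_comm (u n) y, ← hd n] at this
    linarith
  have he_emb : MeasurableEmbedding e :=
    (he_cont.isClosedEmbedding he_inj).measurableEmbedding
  -- measurable retraction r with r ∘ e = id
  obtain ⟨r, hr_meas, hr⟩ :=
    he_emb.exists_measurable_extend (measurable_id (α := K)) (fun _ => hKne)
  -- the kernel given by the disintegration
  set κ : ProbabilityTheory.Kernel L K :=
    ⟨μl, Measure.measurable_of_measurable_coe _ hmeas⟩ with hκ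
  haveI : ProbabilityTheory.IsMarkovKernel κ := ⟨fun l => hprob l⟩
  -- barycenter map g
  set g : L → ℕ → ℝ≥0∞ := fun l n => ∫⁻ x, e x n ∂(μl l) with hg
  have hg_meas : Measurable g := by
    refine measurable_pi_iff.2 fun n => ?_
    have : Measurable fun x : K => e x n := (he_cont.comp' continuous_id).measurable.eval
    exact Measurable.lintegral_kernel (κ := κ) ((continuous_apply n).comp he_cont).measurable
  refine ⟨r ∘ g, hr_meas.comp hg_meas, ?_, ?_⟩
  · -- π (s l) = l a.e.
    filter_upwards [hdirac, hfib] with l hl hfl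
    obtain ⟨x, hx⟩ := hl
    have hgl : g l = e x := by
      funext n
      have hf : Measurable fun y : K => e y n := ((continuous_apply n).comp he_cont).measurable
      simp only [hg, hx]
      exact lintegral_dirac' x hf
    have hsl : (r ∘ g) l = x := by
      simp only [Function.comp_apply, hgl]
      exact congrFun hr x
    rw [hsl]
    -- π x = l since dirac x (π⁻¹ {l})ᶜ = 0
    rw [hx] at hfl
    by_contra hne
    have hxmem : x ∈ (π ⁻¹' {l})ᶜ := by simpa using hne
    have hmeasset : MeasurableSet ((π ⁻¹' {l})ᶜ) :=
      (hπcont.measurable (measurableSet_singleton l)).compl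
    rw [Measure.dirac_apply' _ hmeasset, Set.indicator_of_mem hxmem] at hfl
    simp at hfl
  · -- s (π x) = x a.e.
    have hs_meas : Measurable (r ∘ g) := hr_meas.comp hg_meas
    set A : Set K := {x | (r ∘ g) (π x) = x} with hA
    haveI : SecondCountableTopology K := UniformSpace.secondCountable_of_separable K
    have hA_meas : MeasurableSet A :=
      MeasureTheory.StronglyMeasurable.measurableSet_eq_fun
        (f := fun x : K => (r ∘ g) (π x)) (g := fun x : K => x)
        (hs_meas.comp hπcont.measurable).stronglyMeasurable
        measurable_id.stronglyMeasurable
    have : μ Aᶜ = 0 := by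
      rw [hdis _ hA_meas.compl]
      rw [lintegral_eq_zero_iff (hmeas _ hA_meas.compl)]
      filter_upwards [hdirac, hfib] with l hl hfl
      obtain ⟨x, hx⟩ := hl
      have hgl : g l = e x := by
        funext n
        have hf : Measurable fun y : K => e y n := ((continuous_apply n).comp he_cont).measurable
        simp only [hg, hx]
        exact lintegral_dirac' x hf
      have hsl : (r ∘ g) l = x := by
        simp only [Function.comp_apply, hgl]
        exact congrFun hr x
      -- π x = l
      rw [hx] at hfl
      have hπx : π x = l := by
        by_contra hne
        have hxmem : x ∈ (π ⁻¹' {l})ᶜ := by simpa using hne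
        have hmeasset : MeasurableSet ((π ⁻¹' {l})ᶜ) :=
          (hπcont.measurable (measurableSet_singleton l)).compl
        rw [Measure.dirac_apply' _ hmeasset, Set.indicator_of_mem hxmem] at hfl
        simp at hfl
      rw [hx, Measure.dirac_apply' _ hA_meas.compl]
      have hxA : x ∈ A := by
        simp only [hA, Set.mem_setOf_eq, hπx, hsl]
      simp [Set.indicator_of_notMem, hxA]
    exact this
end

section
/- Let $G$ be a locally compact second countable group acting measurably and nonsingularly on a standard probability space $(X,\mu)$. Then for every $f \in L^\infty(X,\mu)$, the map $g \mapsto f \circ g^{-1}$ (the induced Koopman action) is continuous from $G$ into $L^\infty(X,\mu)$ equipped with the $L^1$-norm. -/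
open MeasureTheory Filter Topology
open scoped ENNReal NNReal Pointwise

theorem haar_translation_L1 {G : Type*} [Group G] [TopologicalSpace G] [IsTopologicalGroup G]
    [LocallyCompactSpace G] [SecondCountableTopology G]
    [MeasurableSpace G] [BorelSpace G]
    (v : G → ℂ) (hv : MemLp v 1 (Measure.haar : Measure G)) :
    Tendsto (fun g : G => ∫⁻ h, (‖v (g * h) - v h‖₊ : ℝ≥0∞) ∂(Measure.haar : Measure G))
      (𝓝 1) (𝓝 0) := by
  set ν : Measure G := Measure.haar with hν
  haveI : Fact ((1:ℝ≥0∞) ≤ 1) := ⟨le_rfl⟩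
  let Φ : C(G, C(G, G)) := (ContinuousMap.mk (fun p : G × G => p.1 * p.2) continuous_mul).curry
  have hgm : ∀ g : G, MeasurePreserving (Φ g) ν ν := fun g =>
    measurePreserving_mul_left ν g
  set V : Lp ℂ 1 ν := hv.toLp v with hV
  have hcont : Continuous fun g : G =>
      Lp.compMeasurePreserving (Φ g) (hgm g) V :=
    Continuous.compMeasurePreservingLp continuous_const Φ.continuous hgm ENNReal.one_ne_top
  have h1 : Tendsto (fun g : G => Lp.compMeasurePreserving (Φ g) (hgm g) V) (𝓝 1)
      (𝓝 (Lp.compMeasurePreserving (Φ 1) (hgm 1) V)) := hcont.tendsto 1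
  have h2 := h1.edist (tendsto_const_nhds
    (x := Lp.compMeasurePreserving (Φ 1) (hgm 1) V) (f := 𝓝 (1:G)))
  rw [edist_self] at h2
  refine h2.congr fun g => ?_
  have hcoe : ∀ g : G, (Lp.compMeasurePreserving (Φ g) (hgm g) V : G → ℂ) =ᵐ[ν]
      fun h => v (g * h) := by
    intro g
    refine (Lp.coeFn_compMeasurePreserving V (hgm g)).trans ?_
    have : (V : G → ℂ) =ᵐ[ν] v := hv.coeFn_toLp
    have := (hgm g).quasiMeasurePreserving.ae_eq_comp this.symm
    exact this.symm
  have e1 : eLpNorm (((Lp.compMeasurePreserving (Φ g) (hgm g) V : Lp ℂ 1 ν) : G → ℂ) -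
      ((Lp.compMeasurePreserving (Φ 1) (hgm 1) V : Lp ℂ 1 ν) : G → ℂ)) 1 ν
      = eLpNorm (fun h => v (g * h) - v (1 * h)) 1 ν :=
    eLpNorm_congr_ae ((hcoe g).sub (hcoe 1))
  rw [Lp.edist_def, e1, eLpNorm_one_eq_lintegral_enorm]
  simp [one_mul]
  rfl

theorem koopman_key {G : Type*} [Group G] [TopologicalSpace G] [IsTopologicalGroup G]
    [LocallyCompactSpace G] [SecondCountableTopology G]
    [MeasurableSpace G] [BorelSpace G]
    {X : Type*} [MeasurableSpace X]
    (μ : Measure X) [IsProbabilityMeasure μ]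
    (a : G → X → X)
    (hmeas : Measurable fun p : G × X => a p.1 p.2)
    (hmul : ∀ g h x, a (g * h) x = a g (a h x))
    (hns : ∀ g, Measure.map (a g) μ ≪ μ ∧ μ ≪ Measure.map (a g) μ)
    (f : X → ℂ) (hfmeas : Measurable f) (C : ℝ) (hfbd : ∀ᵐ x ∂μ, ‖f x‖ ≤ C) :
    Tendsto (fun g : G => ∫⁻ x, (‖f (a g x) - f x‖₊ : ℝ≥0∞) ∂μ) (𝓝 1) (𝓝 0) := by
  classical
  set ν : Measure G := Measure.haar with hνdef
  obtain ⟨L₀, hL₀comp, hL₀nhds⟩ := exists_compact_mem_nhds (1 : G)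
  set L : Set G := closure L₀ with hLdef
  have hLcomp : IsCompact L := hL₀comp.closure
  have hLnhds : L ∈ 𝓝 (1:G) := mem_of_superset hL₀nhds subset_closure
  have hLmeas : MeasurableSet L := isClosed_closure.measurableSet
  set K : Set G := closure (L * L) with hKdef
  have hKcomp : IsCompact K := (hLcomp.mul hLcomp).closure
  have hKmeas : MeasurableSet K := isClosed_closure.measurableSet
  have hLK : L ⊆ K := by
    intro x hx
    have h1 : (1:G) ∈ L := mem_of_mem_nhds hLnhds
    exact subset_closure ⟨x, hx, 1, h1, mul_one x⟩
  have hmulK : ∀ {g h : G}, g ∈ L → h ∈ L → g * h ∈ K := fun hg hh =>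
    subset_closure (Set.mul_mem_mul hg hh)
  -- measurability helpers
  have haMeas : ∀ g : G, Measurable (a g) := fun g =>
    hmeas.comp (measurable_const.prodMk measurable_id)
  have hfa : ∀ g : G, Measurable fun x => f (a g x) := fun g => hfmeas.comp (haMeas g)
  have smeas : ∀ g : G, Measurable fun x => (‖f (a g x) - f x‖₊ : ℝ≥0∞) := fun g =>
    ((hfa g).sub hfmeas).enorm
  have habd : ∀ g : G, ∀ᵐ x ∂μ, ‖f (a g x)‖ ≤ C := by
    intro g
    have hS : MeasurableSet {x | ¬ ‖f x‖ ≤ C} :=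
      (measurableSet_le hfmeas.norm measurable_const).compl
    have hS0 : μ {x | ¬ ‖f x‖ ≤ C} = 0 := hfbd
    have h0 : Measure.map (a g) μ {x | ¬ ‖f x‖ ≤ C} = 0 := (hns g).1 hS0
    rw [Measure.map_apply (haMeas g) hS] at h0
    exact h0
  have habd' : ∀ g : G, ∀ᵐ x ∂μ, (‖f (a g x)‖₊ : ℝ≥0∞) ≤ ENNReal.ofReal C := by
    intro g
    refine (habd g).mono fun x hx => ?_
    rw [← enorm_eq_nnnorm, ← ofReal_norm_eq_enorm]
    exact ENNReal.ofReal_le_ofReal hx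
  have hfbd' : ∀ᵐ x ∂μ, (‖f x‖₊ : ℝ≥0∞) ≤ ENNReal.ofReal C := by
    refine hfbd.mono fun x hx => ?_
    rw [← enorm_eq_nnnorm, ← ofReal_norm_eq_enorm]
    exact ENNReal.ofReal_le_ofReal hx
  -- truncated fiberwise functions
  set v : X → G → ℂ := fun x => K.indicator (fun h => f (a h x)) with hvdef
  have hvJoint : Measurable fun p : X × G => v p.1 p.2 := by
    have heq : (fun p : X × G => v p.1 p.2)
        = Set.indicator (Set.univ ×ˢ K) (fun p : X × G => f (a p.2 p.1)) := by
      funext p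
      by_cases hp : p.2 ∈ K <;> simp [v, Set.indicator, hp]
    rw [heq]
    exact (hfmeas.comp (hmeas.comp (measurable_snd.prodMk measurable_fst))).indicator
      (MeasurableSet.univ.prod hKmeas)
  have hvMeas : ∀ x, Measurable (v x) := fun x =>
    (hfmeas.comp (hmeas.comp (measurable_id.prodMk measurable_const))).indicator hKmeas
  set Gx : X → ℝ≥0∞ := fun x => ∫⁻ h, (‖v x h‖₊ : ℝ≥0∞) ∂ν with hGdef
  have hGmeas : Measurable Gx := Measurable.lintegral_prod_right hvJoint.enorm
  have hGint : ∫⁻ x, Gx x ∂μ ≤ ENNReal.ofReal C * ν K := by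
    have hswap0 : ∫⁻ x, Gx x ∂μ = ∫⁻ h, (∫⁻ x, (‖v x h‖₊ : ℝ≥0∞) ∂μ) ∂ν :=
      lintegral_lintegral_swap hvJoint.enorm.aemeasurable
    rw [hswap0]
    have hb : ∀ h, (∫⁻ x, (‖v x h‖₊ : ℝ≥0∞) ∂μ)
        ≤ K.indicator (fun _ => ENNReal.ofReal C) h := by
      intro h
      by_cases hh : h ∈ K
      · rw [Set.indicator_of_mem hh]
        have hae : ∀ᵐ x ∂μ, (‖v x h‖₊ : ℝ≥0∞) ≤ ENNReal.ofReal C := by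
          refine (habd' h).mono fun x hx => ?_
          simpa [v, Set.indicator_of_mem hh] using hx
        calc ∫⁻ x, (‖v x h‖₊ : ℝ≥0∞) ∂μ ≤ ∫⁻ _, ENNReal.ofReal C ∂μ := lintegral_mono_ae hae
          _ = ENNReal.ofReal C := by simp
      · simp [v, Set.indicator_of_notMem hh]
    calc ∫⁻ h, (∫⁻ x, (‖v x h‖₊ : ℝ≥0∞) ∂μ) ∂ν
        ≤ ∫⁻ h, K.indicator (fun _ => ENNReal.ofReal C) h ∂ν := lintegral_mono hb
      _ = ENNReal.ofReal C * ν K := by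
          rw [lintegral_indicator hKmeas]
          simp [mul_comm]
  have hGfin : ∫⁻ x, Gx x ∂μ ≠ ⊤ :=
    (lt_of_le_of_lt hGint (ENNReal.mul_lt_top ENNReal.ofReal_lt_top
      hKcomp.measure_lt_top)).ne
  have hGae : ∀ᵐ x ∂μ, Gx x < ⊤ := ae_lt_top hGmeas hGfin
  have hmem : ∀ᵐ x ∂μ, MemLp (v x) 1 ν := by
    refine hGae.mono fun x hx => ?_
    refine ⟨(hvMeas x).aestronglyMeasurable, ?_⟩
    rw [eLpNorm_one_eq_lintegral_enorm]
    exact hx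
  -- sequential reduction
  rw [tendsto_iff_seq_tendsto]
  intro u hu
  refine tendsto_of_subseq_tendsto fun ns hns' => ?_
  set w : ℕ → G := u ∘ ns with hwdef
  have hw : Tendsto w atTop (𝓝 1) := hu.comp hns'
  have hwL : ∀ᶠ n in atTop, w n ∈ L := hw.eventually_mem hLnhds
  set F : ℕ → X → ℝ≥0∞ := fun n x => ∫⁻ h, (‖v x (w n * h) - v x h‖₊ : ℝ≥0∞) ∂ν with hFdef
  have hFmeas : ∀ n, Measurable (F n) := by
    intro n
    refine Measurable.lintegral_prod_right ?_
    exact ((hvJoint.comp (measurable_fst.prodMk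
      (((continuous_mul_left (w n)).measurable).comp measurable_snd))).sub hvJoint).enorm
  have hFbd : ∀ n, ∀ᵐ x ∂μ, F n x ≤ 2 * Gx x := by
    intro n
    refine Filter.Eventually.of_forall fun x => ?_
    have hm1 : Measurable fun h => (‖v x (w n * h)‖₊ : ℝ≥0∞) :=
      ((hvMeas x).comp (continuous_mul_left (w n)).measurable).enorm
    calc F n x ≤ ∫⁻ h, ((‖v x (w n * h)‖₊ : ℝ≥0∞) + (‖v x h‖₊ : ℝ≥0∞)) ∂ν := by
          refine lintegral_mono fun h => ?_
          simpa [ENNReal.coe_add] using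
            ENNReal.coe_le_coe.mpr (nnnorm_sub_le (v x (w n * h)) (v x h))
      _ = (∫⁻ h, (‖v x (w n * h)‖₊ : ℝ≥0∞) ∂ν) + ∫⁻ h, (‖v x h‖₊ : ℝ≥0∞) ∂ν :=
          lintegral_add_left hm1 _
      _ = Gx x + Gx x := by
          rw [lintegral_mul_left_eq_self (fun h => (‖v x h‖₊ : ℝ≥0∞)) (w n)]
      _ = 2 * Gx x := (two_mul _).symm
  have hbfin : ∫⁻ x, 2 * Gx x ∂μ ≠ ⊤ := by
    rw [lintegral_const_mul 2 hGmeas]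
    exact (ENNReal.mul_lt_top (by norm_num) hGfin.lt_top).ne
  have hFlim : ∀ᵐ x ∂μ, Tendsto (fun n => F n x) atTop (𝓝 0) := by
    refine hmem.mono fun x hx => ?_
    exact (haar_translation_L1 (v x) hx).comp hw
  have hD : Tendsto (fun n => ∫⁻ x, F n x ∂μ) atTop (𝓝 0) := by
    have := tendsto_lintegral_of_dominated_convergence (F := F) (f := fun _ => 0)
      (bound := fun x => 2 * Gx x) hFmeas hFbd hbfin hFlim
    simpa using this
  set R : ℕ → ℝ≥0∞ := fun n =>
    ∫⁻ x, (∫⁻ h in L, (‖f (a (w n * h) x) - f (a h x)‖₊ : ℝ≥0∞) ∂ν) ∂μ with hRdef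
  have hRD : ∀ᶠ n in atTop, R n ≤ ∫⁻ x, F n x ∂μ := by
    refine hwL.mono fun n hn => ?_
    refine lintegral_mono fun x => ?_
    have heq : ∫⁻ h in L, (‖f (a (w n * h) x) - f (a h x)‖₊ : ℝ≥0∞) ∂ν
        = ∫⁻ h in L, (‖v x (w n * h) - v x h‖₊ : ℝ≥0∞) ∂ν := by
      refine setLIntegral_congr_fun hLmeas (fun h hh => ?_)
      rw [hvdef]
      simp only [Set.indicator_of_mem (hLK hh), Set.indicator_of_mem (hmulK hn hh)]
    rw [heq]
    exact lintegral_mono' Measure.restrict_le_self le_rfl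
  have hR : Tendsto R atTop (𝓝 0) :=
    tendsto_of_tendsto_of_tendsto_of_le_of_le' tendsto_const_nhds hD
      (Filter.Eventually.of_forall fun n => zero_le) hRD
  -- swap integrals
  set p : ℕ → G → ℝ≥0∞ := fun n h =>
    ∫⁻ x, (‖f (a (w n * h) x) - f (a h x)‖₊ : ℝ≥0∞) ∂μ with hpdef
  have hpJoint : ∀ n, Measurable fun q : X × G =>
      (‖f (a (w n * q.2) q.1) - f (a q.2 q.1)‖₊ : ℝ≥0∞) := by
    intro n
    have h1 : Measurable fun q : X × G => f (a (w n * q.2) q.1) :=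
      hfmeas.comp (hmeas.comp ((((continuous_mul_left (w n)).measurable).comp
        measurable_snd).prodMk measurable_fst))
    have h2 : Measurable fun q : X × G => f (a q.2 q.1) :=
      hfmeas.comp (hmeas.comp (measurable_snd.prodMk measurable_fst))
    exact (h1.sub h2).enorm
  have hpmeas : ∀ n, Measurable (p n) := fun n =>
    Measurable.lintegral_prod_left (hpJoint n)
  have hswap : ∀ n, R n = ∫⁻ h in L, p n h ∂ν := fun n =>
    lintegral_lintegral_swap (hpJoint n).aemeasurable
  have hS : Tendsto (fun n => ∫⁻ h in L, p n h ∂ν) atTop (𝓝 0) := by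
    refine hR.congr fun n => hswap n
  -- first extraction
  have hpow : ∀ k : ℕ, (0:ℝ≥0∞) < (2:ℝ≥0∞)⁻¹ ^ k := fun k =>
    ENNReal.pow_pos (ENNReal.inv_pos.mpr ENNReal.ofNat_ne_top) k
  have htsum_geo : (∑' k : ℕ, ((2:ℝ≥0∞)⁻¹) ^ k) ≠ ⊤ := by
    rw [ENNReal.tsum_geometric]
    simp [ENNReal.one_sub_inv_two]
  have hexists : ∀ k : ℕ, ∀ᶠ n in atTop, (∫⁻ h in L, p n h ∂ν) < (2:ℝ≥0∞)⁻¹ ^ k := fun k =>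
    hS.eventually_lt_const (hpow k)
  obtain ⟨φ, hφmono, hφ⟩ := Filter.extraction_forall_of_eventually hexists
  have hsum_int : ∫⁻ h in L, (∑' k, p (φ k) h) ∂ν ≠ ⊤ := by
    rw [lintegral_tsum fun k => (hpmeas (φ k)).aemeasurable]
    exact ne_top_of_le_ne_top htsum_geo (ENNReal.tsum_le_tsum fun k => (hφ k).le)
  have hae1 : ∀ᵐ h ∂(ν.restrict L), Tendsto (fun k => p (φ k) h) atTop (𝓝 0) := by
    have hlt := ae_lt_top (Measurable.ennreal_tsum fun k => hpmeas (φ k)) hsum_int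
    exact hlt.mono fun h hh => ENNReal.tendsto_atTop_zero_of_tsum_ne_top hh.ne
  have hLpos : ν L ≠ 0 := by
    have h1 : (0:ℝ≥0∞) < ν (interior L) := by
      refine isOpen_interior.measure_pos ν ⟨1, ?_⟩
      exact mem_interior_iff_mem_nhds.mpr hLnhds
    exact (h1.trans_le (measure_mono interior_subset)).ne'
  haveI : NeBot (ae (ν.restrict L)) := by
    refine ae_neBot.mpr ?_
    simp only [ne_eq, Measure.restrict_eq_zero]
    exact hLpos
  obtain ⟨h₀, hh₀⟩ := hae1.exists
  -- transfer to μ via the equivalent measure κ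
  set κ : Measure X := Measure.map (a h₀) μ with hκdef
  have hp0 : Tendsto (fun k => ∫⁻ y, (‖f (a (w (φ k)) y) - f y‖₊ : ℝ≥0∞) ∂κ) atTop (𝓝 0) := by
    refine hh₀.congr fun k => ?_
    rw [hκdef, lintegral_map (smeas (w (φ k))) (haMeas h₀)]
    refine lintegral_congr fun x => ?_
    rw [← hmul]
  -- second extraction
  have hexists2 : ∀ j : ℕ, ∀ᶠ k in atTop,
      (∫⁻ y, (‖f (a (w (φ k)) y) - f y‖₊ : ℝ≥0∞) ∂κ) < (2:ℝ≥0∞)⁻¹ ^ j := fun j =>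
    hp0.eventually_lt_const (hpow j)
  obtain ⟨ψ, hψmono, hψ⟩ := Filter.extraction_forall_of_eventually hexists2
  have hsum2 : ∫⁻ y, (∑' j, (‖f (a (w (φ (ψ j))) y) - f y‖₊ : ℝ≥0∞)) ∂κ ≠ ⊤ := by
    rw [lintegral_tsum fun j => (smeas (w (φ (ψ j)))).aemeasurable]
    exact ne_top_of_le_ne_top htsum_geo (ENNReal.tsum_le_tsum fun j => (hψ j).le)
  have hae2 : ∀ᵐ y ∂κ, Tendsto (fun j => (‖f (a (w (φ (ψ j))) y) - f y‖₊ : ℝ≥0∞))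
      atTop (𝓝 0) := by
    have hlt := ae_lt_top (Measurable.ennreal_tsum fun j => smeas (w (φ (ψ j)))) hsum2
    exact hlt.mono fun y hy => ENNReal.tendsto_atTop_zero_of_tsum_ne_top hy.ne
  have hae2' : ∀ᵐ y ∂μ, Tendsto (fun j => (‖f (a (w (φ (ψ j))) y) - f y‖₊ : ℝ≥0∞))
      atTop (𝓝 0) := (hns h₀).2.ae_le hae2
  have hbd2 : ∀ᵐ y ∂μ, ∀ j, (‖f (a (w (φ (ψ j))) y) - f y‖₊ : ℝ≥0∞)
      ≤ ENNReal.ofReal C + ENNReal.ofReal C := by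
    rw [ae_all_iff]
    intro j
    filter_upwards [habd' (w (φ (ψ j))), hfbd'] with y h1 h2
    calc (‖f (a (w (φ (ψ j))) y) - f y‖₊ : ℝ≥0∞)
        ≤ (‖f (a (w (φ (ψ j))) y)‖₊ : ℝ≥0∞) + (‖f y‖₊ : ℝ≥0∞) := by
          simpa [ENNReal.coe_add] using
            ENNReal.coe_le_coe.mpr (nnnorm_sub_le (f (a (w (φ (ψ j))) y)) (f y))
      _ ≤ ENNReal.ofReal C + ENNReal.ofReal C := add_le_add h1 h2
  have final : Tendsto (fun j => ∫⁻ y, (‖f (a (w (φ (ψ j))) y) - f y‖₊ : ℝ≥0∞) ∂μ)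
      atTop (𝓝 0) := by
    have hconst : ∫⁻ _, (ENNReal.ofReal C + ENNReal.ofReal C) ∂μ ≠ ⊤ := by
      rw [lintegral_const]
      simp [ENNReal.add_ne_top, ENNReal.ofReal_ne_top]
    have := tendsto_lintegral_of_dominated_convergence (f := fun _ => 0)
      (bound := fun _ => ENNReal.ofReal C + ENNReal.ofReal C)
      (fun j => smeas (w (φ (ψ j)))) (fun j => hbd2.mono fun y hy => hy j)
      hconst hae2'
    simpa using this
  exact ⟨φ ∘ ψ, by simpa [hwdef, Function.comp] using final⟩

/-- For a measurable nonsingular action of a locally compact second countable group `G` on a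
standard probability space `(X, μ)`, the induced Koopman action on `L^∞(X, μ)` is strongly
continuous with respect to the `L¹`-norm: for each essentially bounded measurable `f`, the
map `g ↦ f ∘ g⁻¹` is continuous from `G` into `L¹(X, μ)`. -/
theorem koopman_action_L1_strongly_continuous
    {G : Type*} [Group G] [TopologicalSpace G] [IsTopologicalGroup G]
    [LocallyCompactSpace G] [SecondCountableTopology G]
    [MeasurableSpace G] [BorelSpace G]
    {X : Type*} [MeasurableSpace X] [StandardBorelSpace X]
    (μ : Measure X) [IsProbabilityMeasure μ]
    (a : G → X → X)
    (hmeas : Measurable fun p : G × X => a p.1 p.2)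
    (hone : ∀ x, a 1 x = x) (hmul : ∀ g h x, a (g * h) x = a g (a h x))
    (hns : ∀ g, Measure.map (a g) μ ≪ μ ∧ μ ≪ Measure.map (a g) μ)
    (f : X → ℂ) (hfmeas : Measurable f) (C : ℝ) (hfbd : ∀ᵐ x ∂μ, ‖f x‖ ≤ C) (g₀ : G) :
    Tendsto (fun g : G => eLpNorm (fun x => f (a g⁻¹ x) - f (a g₀⁻¹ x)) 1 μ)
      (𝓝 g₀) (𝓝 0) := by
  have haMeas : ∀ g : G, Measurable (a g) := fun g =>
    hmeas.comp (measurable_const.prodMk measurable_id)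
  set ν₀ : Measure X := Measure.map (a g₀⁻¹) μ with hν₀
  have hcomp : ∀ g h : G, Measure.map (a g) (Measure.map (a h) μ)
      = Measure.map (a (g * h)) μ := by
    intro g h
    rw [Measure.map_map (haMeas g) (haMeas h)]
    congr 1
    funext x
    exact (hmul g h x).symm
  haveI : IsProbabilityMeasure ν₀ := Measure.isProbabilityMeasure_map (haMeas g₀⁻¹).aemeasurable
  have hns' : ∀ g, Measure.map (a g) ν₀ ≪ ν₀ ∧ ν₀ ≪ Measure.map (a g) ν₀ := by
    intro g
    rw [hν₀, hcomp g g₀⁻¹]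
    constructor
    · exact ((hns (g * g₀⁻¹)).1.trans (hns g₀⁻¹).2)
    · exact ((hns g₀⁻¹).1.trans (hns (g * g₀⁻¹)).2)
  have hfbd' : ∀ᵐ x ∂ν₀, ‖f x‖ ≤ C := (hns g₀⁻¹).1.ae_le hfbd
  have key := koopman_key ν₀ a hmeas hmul hns' f hfmeas C hfbd'
  have hcont : Tendsto (fun g : G => g⁻¹ * g₀) (𝓝 g₀) (𝓝 1) := by
    have h := (continuous_inv.mul (continuous_const (y := g₀))).tendsto g₀
    simp at h
    exact h
  have main := key.comp hcont
  refine main.congr fun g => ?_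
  show (∫⁻ x, (‖f (a (g⁻¹ * g₀) x) - f x‖₊ : ℝ≥0∞) ∂ν₀) = _
  have hm : Measurable fun x : X => (‖f (a (g⁻¹ * g₀) x) - f x‖₊ : ℝ≥0∞) :=
    ((hfmeas.comp (haMeas (g⁻¹ * g₀))).sub hfmeas).enorm
  rw [eLpNorm_one_eq_lintegral_enorm, hν₀, lintegral_map hm (haMeas g₀⁻¹)]
  refine lintegral_congr fun x => ?_
  rw [← hmul]
  congr 3
  group
end
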